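/- Let k be a positive integer and H a graph with at most k(k+1)/2 edges. Then H has an 'almost k-coloring', i.e., either a proper k-coloring, or a proper (k+1)-coloring in which at least one color class is a singleton. -/

import Mathlib

open Finset

open scoped Classical in
/-- Greedy coloring along the order given by `Fintype.equivFin`. -/
noncomputable def greedyCol {V : Type*} [Fintype V] (G : SimpleGraph V) (v : V) : ℕ :=
  (Finset.Icc 1 ((Finset.univ.filter
      (fun u => Fintype.equivFin V u < Fintype.equivFin V v ∧ G.Adj u v)).card + 1) \
    (Finset.univ.filter
      (fun u => Fintype.equivFin V u < Fintype.equivFin V v ∧ G.Adj u v)).attach.image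
      (fun u => greedyCol G u.1)).min'
    (by
      rw [Finset.sdiff_nonempty]
      intro hsub
      have h1 := Finset.card_le_card hsub
      have h2 := Finset.card_image_le (s := (Finset.univ.filter
        (fun u => Fintype.equivFin V u < Fintype.equivFin V v ∧ G.Adj u v)).attach)
        (f := fun u => greedyCol G u.1)
      rw [Finset.card_attach] at h2
      rw [Nat.card_Icc] at h1
      omega)
termination_by (Fintype.equivFin V v).val
decreasing_by
  all_goals
    have hu := u.2
    simp only [Finset.mem_filter] at hu
    exact Fin.lt_def.mp hu.2.1

open scoped Classical in
lemma greedyCol_spec {V : Type*} [Fintype V] (G : SimpleGraph V) (v : V) :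
    greedyCol G v ∈
      Finset.Icc 1 ((Finset.univ.filter
        (fun u => Fintype.equivFin V u < Fintype.equivFin V v ∧ G.Adj u v)).card + 1) \
      (Finset.univ.filter
        (fun u => Fintype.equivFin V u < Fintype.equivFin V v ∧ G.Adj u v)).attach.image
        (fun u => greedyCol G u.1) := by
  rw [greedyCol]
  exact Finset.min'_mem _ _

open scoped Classical in
lemma greedyCol_proper {V : Type*} [Fintype V] (G : SimpleGraph V) {u v : V}
    (h : G.Adj u v) : greedyCol G u ≠ greedyCol G v := by
  wlog hlt : Fintype.equivFin V u < Fintype.equivFin V v generalizing u v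
  · have hne : Fintype.equivFin V u ≠ Fintype.equivFin V v :=
      fun he => h.ne ((Fintype.equivFin V).injective he)
    have := this h.symm (lt_of_le_of_ne (not_lt.mp hlt) hne.symm)
    exact this.symm
  · have hspec := greedyCol_spec G v
    rw [Finset.mem_sdiff] at hspec
    intro heq
    apply hspec.2
    rw [Finset.mem_image]
    refine ⟨⟨u, ?_⟩, Finset.mem_attach _ _, heq⟩
    simp only [Finset.mem_filter]
    exact ⟨Finset.mem_univ _, hlt, h⟩

open scoped Classical in
lemma greedyCol_le {V : Type*} [Fintype V] (G : SimpleGraph V) (d : ℕ)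
    (hd : ∀ v, G.degree v ≤ d) (v : V) : greedyCol G v ∈ Finset.Icc 1 (d + 1) := by
  have hspec := greedyCol_spec G v
  rw [Finset.mem_sdiff, Finset.mem_Icc] at hspec
  rw [Finset.mem_Icc]
  refine ⟨hspec.1.1, le_trans hspec.1.2 ?_⟩
  have hsub : (Finset.univ.filter
      (fun u => Fintype.equivFin V u < Fintype.equivFin V v ∧ G.Adj u v)) ⊆
      G.neighborFinset v := by
    intro u hu
    simp only [Finset.mem_filter] at hu
    exact (SimpleGraph.mem_neighborFinset _ _ _).2 hu.2.2.symm
  have := Finset.card_le_card hsub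
  rw [SimpleGraph.card_neighborFinset_eq_degree] at this
  have := hd v
  omega

/-- Almost k-colorability. -/
def AlmostCol {V : Type*} (k : ℕ) (H : SimpleGraph V) : Prop :=
  (∃ c : V → ℕ, (∀ u v, H.Adj u v → c u ≠ c v) ∧ ∀ v, c v ∈ Finset.Icc 1 k) ∨
  (∃ c : V → ℕ, (∀ u v, H.Adj u v → c u ≠ c v) ∧ (∀ v, c v ∈ Finset.Icc 1 (k + 1)) ∧
    ∃ i ∈ Finset.Icc 1 (k + 1), {v | c v = i}.ncard = 1)

lemma ncard_incidenceSet {V : Type*} [Fintype V] (H : SimpleGraph V) (v : V) :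
    (H.incidenceSet v).ncard = (H.neighborSet v).ncard := by
  classical
  rw [Set.ncard_eq_toFinset_card', Set.ncard_eq_toFinset_card', Set.toFinset_card,
    Set.toFinset_card, SimpleGraph.card_incidenceSet_eq_degree,
    SimpleGraph.card_neighborSet_eq_degree]

lemma almostCol_aux {V : Type*} [Fintype V] :
    ∀ k : ℕ, 1 ≤ k → ∀ H : SimpleGraph V, 2 * H.edgeSet.ncard ≤ k * (k + 1) →
      AlmostCol k H := by
  intro k hk
  induction k, hk using Nat.le_induction with
  | base =>
    intro H hE
    classical
    by_cases hdeg : ∀ v, H.degree v ≤ 0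
    · exact Or.inl ⟨greedyCol H, fun u v h => greedyCol_proper H h, greedyCol_le H 0 hdeg⟩
    · push_neg at hdeg
      obtain ⟨v, hv⟩ := hdeg
      have hv' : 0 < H.degree v := hv
      rw [← SimpleGraph.card_neighborFinset_eq_degree, Finset.card_pos] at hv'
      obtain ⟨w0, hw0⟩ := hv'
      rw [SimpleGraph.mem_neighborFinset] at hw0
      have hcard : H.edgeSet.ncard ≤ 1 := by omega
      have hone : ∀ e ∈ H.edgeSet, e = s(v, w0) :=
        fun e he => (Set.ncard_le_one (Set.toFinite _)).1 hcard e he s(v, w0)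
          (H.mem_edgeSet.2 hw0)
      refine Or.inr ⟨fun u => if u = v then 2 else 1, ?_, ?_, 2, by simp, ?_⟩
      · intro u w hadj
        have := hone s(u, w) (H.mem_edgeSet.2 hadj)
        rw [Sym2.eq_iff] at this
        rcases this with ⟨hu, hw⟩ | ⟨hu, hw⟩
        · have hwv : w ≠ v := by rw [← hu]; exact hadj.ne'
          simp only [if_pos hu, if_neg hwv]; omega
        · have huv : u ≠ v := by rw [← hw]; exact hadj.ne
          simp only [if_neg huv, if_pos hw]; omega
      · intro u
        by_cases h : u = v <;> simp [h]
      · have : {u : V | (if u = v then 2 else 1) = 2} = {v} := by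
          ext u
          by_cases h : u = v <;> simp [h]
        rw [this, Set.ncard_singleton]
  | succ k hk ih =>
    intro H hE
    classical
    by_cases hdeg : ∀ v, H.degree v ≤ k
    · exact Or.inl ⟨greedyCol H, fun u v h => greedyCol_proper H h, greedyCol_le H k hdeg⟩
    · push_neg at hdeg
      obtain ⟨v, hv⟩ := hdeg
      have hv' : k + 1 ≤ H.degree v := hv
      set H' := H.deleteEdges (H.incidenceSet v) with hH'
      have hsub : H.incidenceSet v ⊆ H.edgeSet := H.incidenceSet_subset v
      have hedge : H'.edgeSet = H.edgeSet \ H.incidenceSet v := by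
        rw [hH', SimpleGraph.edgeSet_deleteEdges]
      have hncard : H'.edgeSet.ncard + (H.incidenceSet v).ncard = H.edgeSet.ncard := by
        rw [hedge]
        exact Set.ncard_diff_add_ncard_of_subset hsub (Set.toFinite _)
      have hinc : (H.incidenceSet v).ncard = H.degree v := by
        rw [ncard_incidenceSet, Set.ncard_eq_toFinset_card', Set.toFinset_card,
          SimpleGraph.card_neighborSet_eq_degree]
      have hE' : 2 * H'.edgeSet.ncard ≤ k * (k + 1) := by
        have hr : (k + 1) * (k + 1 + 1) = k * (k + 1) + 2 * (k + 1) := by ring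
        omega
      have hadj' : ∀ u w : V, u ≠ v → w ≠ v → H.Adj u w → H'.Adj u w := by
        intro u w hu hw h
        rw [hH', SimpleGraph.deleteEdges_adj]
        refine ⟨h, ?_⟩
        rw [SimpleGraph.mk'_mem_incidenceSet_iff]
        rintro ⟨-, h1 | h1⟩
        · exact hu h1.symm
        · exact hw h1.symm
      rcases ih H' hE' with ⟨c', hc1, hc2⟩ | ⟨c', hc1, hc2, i, hi, hsing⟩
      · -- proper k-coloring of H'; give v color k+1
        refine Or.inl ⟨fun u => if u = v then k + 1 else c' u, ?_, ?_⟩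
        · intro u w hadj
          by_cases hu : u = v
          · have hw : w ≠ v := by rw [← hu]; exact hadj.ne'
            have := (Finset.mem_Icc.1 (hc2 w)).2
            simp only [if_pos hu, if_neg hw]
            omega
          · by_cases hw : w = v
            · have := (Finset.mem_Icc.1 (hc2 u)).2
              simp only [if_neg hu, if_pos hw]
              omega
            · simp only [if_neg hu, if_neg hw]
              exact hc1 u w (hadj' u w hu hw hadj)
        · intro u
          by_cases h : u = v
          · simp [h]
          · simp only [if_neg h]
            have := Finset.mem_Icc.1 (hc2 u)
            rw [Finset.mem_Icc]
            omega
      · -- (k+1)-coloring of H' with singleton; give v color k+2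
        refine Or.inr ⟨fun u => if u = v then k + 2 else c' u, ?_, ?_, k + 2, by simp, ?_⟩
        · intro u w hadj
          by_cases hu : u = v
          · have hw : w ≠ v := by rw [← hu]; exact hadj.ne'
            have := (Finset.mem_Icc.1 (hc2 w)).2
            simp only [if_pos hu, if_neg hw]
            omega
          · by_cases hw : w = v
            · have := (Finset.mem_Icc.1 (hc2 u)).2
              simp only [if_neg hu, if_pos hw]
              omega
            · simp only [if_neg hu, if_neg hw]
              exact hc1 u w (hadj' u w hu hw hadj)
        · intro u
          by_cases h : u = v
          · simp [h]
          · simp only [if_neg h]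
            have := Finset.mem_Icc.1 (hc2 u)
            rw [Finset.mem_Icc]
            omega
        · have : {u : V | (if u = v then k + 2 else c' u) = k + 2} = {v} := by
            ext u
            by_cases h : u = v
            · simp [h]
            · have := (Finset.mem_Icc.1 (hc2 u)).2
              simp only [Set.mem_setOf_eq, if_neg h, Set.mem_singleton_iff]
              constructor
              · intro hcontr; omega
              · intro hcontr; exact absurd hcontr h
          rw [this, Set.ncard_singleton]

/-- A graph with at most k(k+1)/2 edges has an almost k-coloring:
either a proper k-coloring, or a proper (k+1)-coloring with a singleton color class. -/
theorem stmt_0 {V : Type*} [Fintype V] (k : ℕ) (hk : 1 ≤ k) (H : SimpleGraph V)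
    (hE : 2 * H.edgeSet.ncard ≤ k * (k + 1)) :
    (∃ c : V → ℕ, (∀ u v, H.Adj u v → c u ≠ c v) ∧ ∀ v, c v ∈ Finset.Icc 1 k) ∨
    (∃ c : V → ℕ, (∀ u v, H.Adj u v → c u ≠ c v) ∧ (∀ v, c v ∈ Finset.Icc 1 (k + 1)) ∧
      ∃ i ∈ Finset.Icc 1 (k + 1), {v | c v = i}.ncard = 1) := by
  exact almostCol_aux k hk H hE
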